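/- The commuting graph of the semiring of 2 × 2 matrices over the binary Boolean semiring 𝓑 has infinite diameter (equivalently, Γ(M_2(𝓑)) is disconnected). -/

import Mathlib

/-- The commuting graph of the semiring of `n × n` matrices over `R`: vertices are the
noncentral matrices, and two distinct vertices are adjacent iff they commute. -/
def commGraph (R : Type*) [Semiring R] (n : ℕ) :
    SimpleGraph {X : Matrix (Fin n) (Fin n) R // ¬ ∀ Y, X * Y = Y * X} where
  Adj X Y := X ≠ Y ∧ X.1 * Y.1 = Y.1 * X.1
  symm := ⟨fun _ _ h => ⟨fun e => h.1 e.symm, h.2.symm⟩⟩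
  loopless := ⟨fun _ h => h.1 rfl⟩


section aux
variable {B : Type*} [CommSemiring B]

lemma X11_noncentral (h01 : (0 : B) ≠ 1) : ¬ ∀ Y, (!![1,0;0,0] : Matrix (Fin 2) (Fin 2) B) * Y = Y * !![1,0;0,0] := by
  intro h
  have := congrFun (congrFun (h !![0,1;0,0]) 0) 1
  simp [Matrix.mul_apply, Fin.sum_univ_two] at this
  exact h01 this.symm

lemma X22_noncentral (h01 : (0 : B) ≠ 1) : ¬ ∀ Y, (!![0,0;0,1] : Matrix (Fin 2) (Fin 2) B) * Y = Y * !![0,0;0,1] := by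
  intro h
  have := congrFun (congrFun (h !![0,1;0,0]) 0) 1
  simp [Matrix.mul_apply, Fin.sum_univ_two] at this
  exact h01 this

lemma X12_noncentral (h01 : (0 : B) ≠ 1) : ¬ ∀ Y, (!![0,1;0,0] : Matrix (Fin 2) (Fin 2) B) * Y = Y * !![0,1;0,0] := by
  intro h
  have := congrFun (congrFun (h !![1,0;0,0]) 0) 1
  simp [Matrix.mul_apply, Fin.sum_univ_two] at this
  exact h01 this

/-- any matrix commuting with X11 that is a vertex and ≠ X11 equals X22 -/
lemma nbr11 (hmem : ∀ x : B, x = 0 ∨ x = 1) (Y : Matrix (Fin 2) (Fin 2) B) (hY : ¬ ∀ Z, Y * Z = Z * Y)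
    (hne : Y ≠ !![1,0;0,0]) (hc : (!![1,0;0,0] : Matrix (Fin 2) (Fin 2) B) * Y = Y * !![1,0;0,0]) :
    Y = !![0,0;0,1] := by
  have hb : Y 0 1 = 0 := by
    have := congrFun (congrFun hc 0) 1
    simpa [Matrix.mul_apply, Fin.sum_univ_two] using this
  have hcc : Y 1 0 = 0 := by
    have := congrFun (congrFun hc 1) 0
    simpa [Matrix.mul_apply, Fin.sum_univ_two, eq_comm] using this
  have heta := Matrix.eta_fin_two Y
  rcases hmem (Y 0 0) with ha | ha <;> rcases hmem (Y 1 1) with hd | hd <;>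
    rw [ha, hd, hb, hcc] at heta
  · exact absurd (fun Z => by rw [heta]; ext i j; fin_cases i <;> fin_cases j <;>
      simp [Matrix.mul_apply, Fin.sum_univ_two]) hY
  · exact heta
  · exact absurd heta hne
  · exact absurd (fun Z => by rw [heta]; ext i j; fin_cases i <;> fin_cases j <;>
      simp [Matrix.mul_apply, Fin.sum_univ_two]) hY

lemma nbr22 (hmem : ∀ x : B, x = 0 ∨ x = 1) (Y : Matrix (Fin 2) (Fin 2) B) (hY : ¬ ∀ Z, Y * Z = Z * Y)
    (hne : Y ≠ !![0,0;0,1]) (hc : (!![0,0;0,1] : Matrix (Fin 2) (Fin 2) B) * Y = Y * !![0,0;0,1]) :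
    Y = !![1,0;0,0] := by
  have hb : Y 0 1 = 0 := by
    have := congrFun (congrFun hc 0) 1
    simpa [Matrix.mul_apply, Fin.sum_univ_two, eq_comm] using this
  have hcc : Y 1 0 = 0 := by
    have := congrFun (congrFun hc 1) 0
    simpa [Matrix.mul_apply, Fin.sum_univ_two] using this
  have heta := Matrix.eta_fin_two Y
  rcases hmem (Y 0 0) with ha | ha <;> rcases hmem (Y 1 1) with hd | hd <;>
    rw [ha, hd, hb, hcc] at heta
  · exact absurd (fun Z => by rw [heta]; ext i j; fin_cases i <;> fin_cases j <;>
      simp [Matrix.mul_apply, Fin.sum_univ_two]) hY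
  · exact absurd heta hne
  · exact heta
  · exact absurd (fun Z => by rw [heta]; ext i j; fin_cases i <;> fin_cases j <;>
      simp [Matrix.mul_apply, Fin.sum_univ_two]) hY

end aux

/-- The commuting graph of `M_2(𝓑)` over the binary Boolean semiring has infinite diameter. -/
theorem diam_commGraph_M2_bool (B : Type*) [CommSemiring B] (h01 : (0 : B) ≠ 1)
    (hmem : ∀ x : B, x = 0 ∨ x = 1) (h11 : (1 : B) + 1 = 1) :
    (commGraph B 2).ediam = ⊤ := by
  set G := commGraph B 2
  let v11 : {X : Matrix (Fin 2) (Fin 2) B // ¬ ∀ Y, X * Y = Y * X} :=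
    ⟨!![1,0;0,0], X11_noncentral h01⟩
  let v12 : {X : Matrix (Fin 2) (Fin 2) B // ¬ ∀ Y, X * Y = Y * X} :=
    ⟨!![0,1;0,0], X12_noncentral h01⟩
  have key : ∀ {u v} (_ : G.Walk u v),
      (u.1 = !![1,0;0,0] ∨ u.1 = !![0,0;0,1]) →
      (v.1 = !![1,0;0,0] ∨ v.1 = !![0,0;0,1]) := by
    intro u v w
    induction w with
    | nil => exact id
    | cons h p ih =>
      rename_i x y _
      intro hu
      apply ih
      obtain ⟨hne, hcomm⟩ := h
      have hne' : y.1 ≠ x.1 := fun e => hne (Subtype.ext e.symm)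
      rcases hu with hu | hu <;> rw [hu] at hcomm hne'
      · exact Or.inr (nbr11 hmem y.1 y.2 hne' hcomm)
      · exact Or.inl (nbr22 hmem y.1 y.2 hne' hcomm)
  have hnr : ¬ G.Reachable v11 v12 := by
    rintro ⟨w⟩
    rcases key w (Or.inl rfl) with h | h <;>
    · have := congrFun (congrFun h 0) 1
      simp at this
      exact h01 this.symm
  rw [eq_top_iff, ← SimpleGraph.edist_eq_top_of_not_reachable hnr]
  exact SimpleGraph.edist_le_ediam
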